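/- For a rule-free program P (facts and integrity constraints only, where constraint bodies are negation-free), the operator Γ_P is monotone: I ⊑ I' implies Γ_P(I) ⊑ Γ_P(I'), and hence by the Knaster–Tarski theorem Γ_P has a least fixed point on the complete lattice of interpretations. -/
import Mathlib


/-- Network formulas over labels `L`. -/
inductive Formula (L : Type) where
  | atom : L → Set ℝ → Formula L
  | and : Formula L → Formula L → Formula L
  | or : Formula L → Formula L → Formula L
  | not : Formula L → Formula L

/-- Satisfaction of a formula by a world (assignment of bounds to labels). -/
def Sat {L : Type} (W : L → Set ℝ) : Formula L → Prop
  | .atom l bnd =>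
      bnd = Set.Icc 0 1 ∨ (bnd ≠ ∅ ∧ bnd ≠ Set.Icc 0 1 ∧ W l ⊆ bnd)
  | .and f g => Sat W f ∧ Sat W g
  | .or f g => Sat W f ∨ Sat W g
  | .not f => ¬ Sat W f

/-- Negation-free formulas. -/
def NegFree {L : Type} : Formula L → Prop
  | .atom _ _ => True
  | .and f g => NegFree f ∧ NegFree g
  | .or f g => NegFree f ∧ NegFree g
  | .not _ => False

/-- Interpretations: time → component → label → bound. -/
def Interp (G L : Type) := ℕ → G → L → Set ℝ

/-- `I ⊑ I'` iff every bound in `I'` is a subset of the corresponding bound in `I`. -/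
def ile {G L : Type} (I I' : Interp G L) : Prop :=
  ∀ t c lab, I' t c lab ⊆ I t c lab

/-- A MANCaLog fact `(⟨lab,bnd⟩,c):[t1,t2]`. -/
structure MFact (G L : Type) where
  lab : L
  bnd : Set ℝ
  c : G
  t1 : ℕ
  t2 : ℕ

/-- An integrity constraint `⟨lab,bnd⟩ ↩ body`. -/
structure IC (L : Type) where
  lab : L
  bnd : Set ℝ
  body : Formula L

/-- A rule-free program: facts and integrity constraints only. -/
structure RuleFreeProgram (G L : Type) where
  facts : List (MFact G L)
  ics : List (IC L)

/-- The `Γ_P` operator for a rule-free program: at `(t,c,lab)` intersect the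
previous bound with `FB` (bounds of applicable facts, independent of `I`) and
`IB` (head bounds of integrity constraints whose bodies `I(t)(c)` satisfies). -/
def Gamma {G L : Type} (P : RuleFreeProgram G L) (I : Interp G L) :
    Interp G L :=
  fun t c lab =>
    (I t c lab) ∩
    (⋂₀ {b | ∃ F ∈ P.facts, F.lab = lab ∧ F.c = c ∧ F.t1 ≤ t ∧ t ≤ F.t2 ∧ b = F.bnd}) ∩
    (⋂₀ {b | ∃ ic ∈ P.ics, ic.lab = lab ∧ Sat (I t c) ic.body ∧ b = ic.bnd})

/-- for a rule-free program whose constraint bodies are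
negation-free, `Γ_P` is monotone w.r.t. `⊑`, and hence (Knaster–Tarski on the
complete lattice of interpretations) it has a least fixed point. -/
theorem rulefree_gamma_monotone_lfp {G L : Type}
    (P : RuleFreeProgram G L) (hics : ∀ ic ∈ P.ics, NegFree ic.body) :
    (∀ I I' : Interp G L, ile I I' → ile (Gamma P I) (Gamma P I')) ∧
    (∃ I : Interp G L, Gamma P I = I ∧
      ∀ J : Interp G L, Gamma P J = J → ile I J) := by
  -- Negation-free satisfaction is preserved under tightening of worlds.
  have satMono : ∀ (f : Formula L) (W W' : L → Set ℝ), NegFree f →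
      (∀ l, W' l ⊆ W l) → Sat W f → Sat W' f := by
    intro f
    induction f with
    | atom l bnd =>
        intro W W' _ hWW hs
        rcases hs with h | ⟨h1, h2, h3⟩
        · exact Or.inl h
        · exact Or.inr ⟨h1, h2, (hWW l).trans h3⟩
    | and f g ihf ihg =>
        intro W W' hnf hWW hs
        exact ⟨ihf W W' hnf.1 hWW hs.1, ihg W W' hnf.2 hWW hs.2⟩
    | or f g ihf ihg =>
        intro W W' hnf hWW hs
        rcases hs with h | h
        · exact Or.inl (ihf W W' hnf.1 hWW h)
        · exact Or.inr (ihg W W' hnf.2 hWW h)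
    | not f ih =>
        intro W W' hnf
        exact absurd hnf not_false
  have mono : ∀ I I' : Interp G L, ile I I' → ile (Gamma P I) (Gamma P I') := by
    intro I I' h t c lab x hx
    obtain ⟨⟨hx1, hx2⟩, hx3⟩ := hx
    refine ⟨⟨h t c lab hx1, hx2⟩, ?_⟩
    intro b hb
    rcases hb with ⟨ic, hic, hlab, hsat, hb⟩
    exact hx3 b ⟨ic, hic, hlab,
      satMono ic.body (I t c) (I' t c) (hics ic hic) (fun l => h t c l) hsat, hb⟩
  refine ⟨mono, ?_⟩
  -- Knaster–Tarski on the complete lattice of interpretations.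
  letI : CompleteLattice (Interp G L) :=
    inferInstanceAs (CompleteLattice (ℕ → G → L → Set ℝ))
  have hle : ∀ I I' : Interp G L, ile I I' ↔ I' ≤ I := by
    intro I I'
    constructor
    · intro h t; intro c; intro lab; exact h t c lab
    · intro h t c lab; exact h t c lab
  have hm : Monotone (Gamma P) := by
    intro I I' h
    exact (hle _ _).mp (mono I' I ((hle I' I).mpr h))
  let f : Interp G L →o Interp G L := ⟨Gamma P, hm⟩
  refine ⟨OrderHom.gfp f, f.map_gfp, ?_⟩
  intro J hJ
  exact (hle _ _).mpr (f.le_gfp (le_of_eq hJ.symm))
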